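/- Let λ be a bounded measured lamination on the unit disk with Thurston norm ‖λ‖_Th, let I be a geodesic ray parametrized by arclength z_d (d ≥ 0) terminating at z ∈ S¹, and let λ_{I_d} be the restriction of λ to the geodesics crossing the subray I_d = {z_k : k ≥ d}. Then there is a constant C₂ depending only on the hyperbolic distance D₀ from 0 to z₀ = z_0 such that ∫_G |ẽ_z(ℓ)| dλ_{I_d}(ℓ) ≤ C₂ · ‖λ‖_Th · e^{−d} for all d ≥ 0; one may take C₂ = 8e^{D₀}cosh(D₀+1)/(1−e^{−1}). -/

import Mathlib

open Set MeasureTheory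

/-- The space of geodesics of the unit disk, identified with pairs of points of the
unit circle (the ideal endpoints). -/
def GeodD := {p : ℂ × ℂ // ‖p.1‖ = 1 ∧ ‖p.2‖ = 1}

noncomputable instance : MeasurableSpace GeodD := by unfold GeodD; infer_instance

/-- The hyperbolic geodesic of the unit disk with ideal endpoints `a, b`. -/
def geoDisk (a b : ℂ) : Set ℂ :=
  {w | ‖w‖ < 1 ∧
    ((starRingEnd ℂ) a * b).im * (‖w‖ ^ 2 + 1) =
      -2 * (((starRingEnd ℂ) b - (starRingEnd ℂ) a) * w).im}

/-- The hyperbolic (Poincaré) distance between two points of the unit disk. -/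
noncomputable def hypDist (u v : ℂ) : ℝ :=
  Real.log ((1 + ‖(u - v) / (1 - (starRingEnd ℂ) v * u)‖) /
    (1 - ‖(u - v) / (1 - (starRingEnd ℂ) v * u)‖))

/-- The set of geodesics crossing (intersecting) a subset `A` of the disk. -/
def crossD (A : Set ℂ) : Set GeodD := {g | (geoDisk g.1.1 g.1.2 ∩ A).Nonempty}

/-- A geodesic arc of unit hyperbolic length in the disk. -/
def IsUnitArcD (A : Set ℂ) : Prop :=
  ∃ g : ℝ → ℂ, (∀ s ∈ Icc (0:ℝ) 1, ‖g s‖ < 1) ∧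
    (∀ s ∈ Icc (0:ℝ) 1, ∀ t ∈ Icc (0:ℝ) 1, hypDist (g s) (g t) = |s - t|) ∧
    A = g '' Icc 0 1

/-- Masses of unit arcs; the Thurston norm is the supremum of this set. -/
def thSetD (μ : Measure GeodD) : Set ℝ :=
  {r | ∃ A, IsUnitArcD A ∧ r = (μ (crossD A)).toReal}

noncomputable def thNormD (μ : Measure GeodD) : ℝ := sSup (thSetD μ)

/-- A measured lamination: supported on a set of pairwise disjoint geodesics. -/
def IsLamD (μ : Measure GeodD) : Prop :=
  ∃ S : Set GeodD, μ Sᶜ = 0 ∧ (∀ g ∈ S, g.1.1 ≠ g.1.2) ∧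
    (∀ g ∈ S, ∀ g' ∈ S,
      geoDisk g.1.1 g.1.2 = geoDisk g'.1.1 g'.1.2 ∨
        Disjoint (geoDisk g.1.1 g.1.2) (geoDisk g'.1.1 g'.1.2))

/-- Boundedness of a measured lamination (finite Thurston norm). -/
def IsBoundedLamD (μ : Measure GeodD) : Prop :=
  IsLamD μ ∧ BddAbove (thSetD μ) ∧ ∀ A, IsUnitArcD A → μ (crossD A) ≠ ⊤

/-- `|ẽ_z|` as a function on the space of geodesics. -/
noncomputable def eAbs (z : ℂ) (g : GeodD) : ℝ :=
  ‖(z - g.1.1) * (z - g.1.2) / (g.1.1 - g.1.2)‖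

lemma mul_conj_one' {a : ℂ} (ha : ‖a‖ = 1) : a * (starRingEnd ℂ) a = 1 := by
  rw [Complex.mul_conj, Complex.normSq_eq_norm_sq, ha]; norm_num
lemma norm_sq_ofReal' (w : ℂ) : ((‖w‖ : ℂ))^2 = w * (starRingEnd ℂ) w := by
  rw [Complex.mul_conj, Complex.normSq_eq_norm_sq]; push_cast; ring

lemma geodid (a b w ca cb cw : ℂ) (hane : a ≠ 0) (hbne : b ≠ 0)
    (ha : a * ca = 1) (hb : b * cb = 1)
    (hE : (a + b) * (1 + w * cw) - 2 * w - 2 * a * b * cw = 0) :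
    (1 - w * cw)^2 * ((a - b) * (ca - cb)) = 4 * ((w - a) * (cw - ca)) * ((w - b) * (cw - cb)) := by
  apply mul_left_cancel₀ (mul_ne_zero hane hbne)
  linear_combination (-((a+b)*(1+w*cw) - 2*w - 2*a*b*cw)) * hE
    + ((1-w*cw)^2*(a-b)*b + 4*(w-a)*(w-b)*(b*cw-1) - 4*(w-a)*(w-b)*(b*cb-1)) * ha
    + (-(1-w*cw)^2*(a-b)*a + 4*(w-a)*(w-b)*(a*cw-1)) * hb

lemma ortho (z a b w cz ca cb cw : ℂ) (hzne : z ≠ 0) (hane : a ≠ 0) (hbne : b ≠ 0)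
    (hz : z * cz = 1) (ha : a * ca = 1) (hb : b * cb = 1)
    (hE : (a + b) * (1 + w * cw) - 2 * w - 2 * a * b * cw = 0) :
    ((z - a) * (w - b)) * ((cz - cb) * (cw - ca)) + ((cz - ca) * (cw - cb)) * ((z - b) * (w - a)) = 0 := by
  apply mul_left_cancel₀ (mul_ne_zero (mul_ne_zero hzne hane) hbne)
  linear_combination (-((z-a)*(z-b))) * hE
    + ((-1)*b*z^2*w*cw + (-1)*b*z^2*cz*w + 2*b*cb*z^2*w + b^2*z*w*cw + b^2*z^2*cz + (-1)*b^2*cb*z*w + (-1)*b^2*cb*z^2 + a*b*z*cz*w + a*b*z^2*cw + (-1)*a*b*cb*z*w + (-1)*a*b*cb*z^2 + (-1)*a*b^2*z*cw + (-1)*a*b^2*z*cz + 2*a*b^2*cb*z) * ha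
    + (2*z^2*w + (-1)*b*z*w + (-1)*b*z^2 + (-1)*a*z*w + (-1)*a*z^2 + (-1)*a*z^2*w*cw + (-1)*a*z^2*cz*w + 2*a*b*z + a*b*z*cz*w + a*b*z^2*cw + a^2*z*w*cw + a^2*z^2*cz + (-1)*a^2*b*z*cw + (-1)*a^2*b*z*cz) * hb
    + ((-1)*b*z*w + b^2*z + (-1)*a*z*w + 2*a*b*w + 2*a*b*z*w*cw + (-1)*a*b^2 + (-1)*a*b^2*w*cw + (-1)*a*b^2*z*cw + a^2*z + (-1)*a^2*b + (-1)*a^2*b*w*cw + (-1)*a^2*b*z*cw + 2*a^2*b^2*cw) * hz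

lemma geo_E' {a b w : ℂ} (ha : ‖a‖ = 1) (hb : ‖b‖ = 1) (hab : a ≠ b)
    (hw : ((starRingEnd ℂ) a * b).im * (‖w‖ ^ 2 + 1) =
      -2 * (((starRingEnd ℂ) b - (starRingEnd ℂ) a) * w).im) :
    (a + b) * (1 + w * (starRingEnd ℂ) w) - 2 * w - 2 * a * b * (starRingEnd ℂ) w = 0 := by
  have ha' := mul_conj_one' ha
  have hb' := mul_conj_one' hb
  have hn := norm_sq_ofReal' w
  have h1 : (starRingEnd ℂ) a * b - a * (starRingEnd ℂ) b
      = 2 * (((starRingEnd ℂ) a * b).im : ℂ) * Complex.I := by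
    have := Complex.sub_conj ((starRingEnd ℂ) a * b)
    simpa [map_mul, Complex.conj_conj] using this
  have h2 : ((starRingEnd ℂ) b - (starRingEnd ℂ) a) * w - (b - a) * (starRingEnd ℂ) w
      = 2 * ((((starRingEnd ℂ) b - (starRingEnd ℂ) a) * w).im : ℂ) * Complex.I := by
    have := Complex.sub_conj (((starRingEnd ℂ) b - (starRingEnd ℂ) a) * w)
    simpa [map_mul, map_sub, Complex.conj_conj] using this
  have hc : ((((starRingEnd ℂ) a * b).im : ℂ)) * ((‖w‖ : ℂ) ^ 2 + 1)
      = -2 * ((((starRingEnd ℂ) b - (starRingEnd ℂ) a) * w).im : ℂ) := by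
    have := congrArg (fun r : ℝ => (r : ℂ)) hw
    push_cast at this
    exact this
  have hab2 : (a - b) * ((a + b) * (1 + w * (starRingEnd ℂ) w) - 2 * w - 2 * a * b * (starRingEnd ℂ) w) = 0 := by
    linear_combination (-2*a*b*Complex.I) * hc
      + (-(a*b*(w*(starRingEnd ℂ) w+1))) * h1
      + (-2*a*b) * h2
      + (2*a*b*Complex.I*((((starRingEnd ℂ) a * b).im : ℂ))) * hn
      + (b^2*(w*(starRingEnd ℂ) w+1) - 2*b*w) * ha'
      + (2*a*w - a^2*(w*(starRingEnd ℂ) w+1)) * hb'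
  rcases mul_eq_zero.mp hab2 with h | h
  · exact absurd (sub_eq_zero.mp h) hab
  · exact h

lemma keyBound {z a b w : ℂ} (hz : ‖z‖ = 1) (ha : ‖a‖ = 1) (hb : ‖b‖ = 1)
    (hw : ‖w‖ < 1)
    (hgeo : ((starRingEnd ℂ) a * b).im * (‖w‖ ^ 2 + 1) =
      -2 * (((starRingEnd ℂ) b - (starRingEnd ℂ) a) * w).im) :
    ‖(z - a) * (z - b) / (a - b)‖ * (1 - ‖w‖^2) ≤ ‖z - w‖^2 := by
  have hw2 : (0:ℝ) < 1 - ‖w‖^2 := by nlinarith [norm_nonneg w]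
  by_cases hab : a = b
  · rw [hab, sub_self, div_zero, norm_zero, zero_mul]
    positivity
  have hane : a ≠ 0 := by intro h; rw [h] at ha; simp at ha
  have hbne : b ≠ 0 := by intro h; rw [h] at hb; simp at hb
  have hzne : z ≠ 0 := by intro h; rw [h] at hz; simp at hz
  have hE := geo_E' ha hb hab hgeo
  have hII : (1 - ‖w‖^2) * ‖a - b‖ = 2 * (‖w - a‖ * ‖w - b‖) := by
    have hcx := geodid a b w ((starRingEnd ℂ) a) ((starRingEnd ℂ) b) ((starRingEnd ℂ) w)
      hane hbne (mul_conj_one' ha) (mul_conj_one' hb) hE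
    have e1 : (a - b) * ((starRingEnd ℂ) a - (starRingEnd ℂ) b) = ((‖a - b‖:ℂ))^2 := by
      rw [norm_sq_ofReal', map_sub]
    have e2 : (w - a) * ((starRingEnd ℂ) w - (starRingEnd ℂ) a) = ((‖w - a‖:ℂ))^2 := by
      rw [norm_sq_ofReal', map_sub]
    have e3 : (w - b) * ((starRingEnd ℂ) w - (starRingEnd ℂ) b) = ((‖w - b‖:ℂ))^2 := by
      rw [norm_sq_ofReal', map_sub]
    have e4 : 1 - w * (starRingEnd ℂ) w = ((1 - ‖w‖^2 : ℝ) : ℂ) := by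
      rw [← norm_sq_ofReal']; push_cast; ring
    rw [e1, e2, e3, e4] at hcx
    have hre : (1 - ‖w‖^2)^2 * ‖a - b‖^2 = 4 * ‖w - a‖^2 * ‖w - b‖^2 := by
      rw [← Complex.ofReal_inj]
      push_cast at hcx ⊢
      linear_combination hcx
    have h1 : (0:ℝ) ≤ (1 - ‖w‖^2) * ‖a - b‖ := by positivity
    have h2 : (0:ℝ) ≤ 2 * (‖w - a‖ * ‖w - b‖) := by positivity
    refine (pow_left_inj₀ h1 h2 (two_ne_zero)).mp ?_
    nlinarith [hre]
  have hS := ortho z a b w ((starRingEnd ℂ) z) ((starRingEnd ℂ) a) ((starRingEnd ℂ) b)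
    ((starRingEnd ℂ) w) hzne hane hbne (mul_conj_one' hz) (mul_conj_one' ha) (mul_conj_one' hb) hE
  have hpyth : ‖(z - w) * (a - b)‖^2 = ‖(z - a) * (w - b)‖^2 + ‖(z - b) * (w - a)‖^2 := by
    have hd : (z - w) * (a - b) = (z - a) * (w - b) - (z - b) * (w - a) := by ring
    rw [hd, ← Complex.ofReal_inj]
    push_cast
    rw [norm_sq_ofReal', norm_sq_ofReal', norm_sq_ofReal']
    simp only [map_mul, map_sub]
    linear_combination -hS
  have hk : (0:ℝ) < ‖a - b‖ := by
    rw [norm_pos_iff]; exact sub_ne_zero.mpr hab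
  have hKne : ‖a - b‖ ≠ 0 := ne_of_gt hk
  have lhs_eq : ‖(z - a) * (z - b) / (a - b)‖ * (1 - ‖w‖^2) * ‖a - b‖^2
      = 2 * (‖(z - a) * (w - b)‖ * ‖(z - b) * (w - a)‖) := by
    rw [norm_div, norm_mul, norm_mul, norm_mul, div_mul_eq_mul_div, div_mul_eq_mul_div,
      div_eq_iff hKne]
    linear_combination (‖z - a‖*‖z - b‖*‖a - b‖) * hII
  have hnorm : ‖(z - a) * (w - b)‖^2 + ‖(z - b) * (w - a)‖^2 = ‖z - w‖^2 * ‖a - b‖^2 := by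
    rw [← hpyth, norm_mul]; ring
  have hfin : ‖(z - a) * (z - b) / (a - b)‖ * (1 - ‖w‖^2) * ‖a - b‖^2
      ≤ ‖z - w‖^2 * ‖a - b‖^2 := by
    rw [lhs_eq, ← hnorm]
    nlinarith [sq_nonneg (‖(z - a) * (w - b)‖ - ‖(z - b) * (w - a)‖)]
  have hk2 : (0:ℝ) < ‖a - b‖^2 := by positivity
  exact le_of_mul_le_mul_right hfin hk2

lemma normSq_identity (u v : ℂ) :
    ‖1 - (starRingEnd ℂ) v * u‖^2 - ‖u - v‖^2 = (1 - ‖u‖^2) * (1 - ‖v‖^2) := by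
  rw [← Complex.ofReal_inj]
  push_cast
  rw [norm_sq_ofReal', norm_sq_ofReal', norm_sq_ofReal', norm_sq_ofReal']
  simp only [map_sub, map_mul, map_one, Complex.conj_conj]
  ring

lemma MN_lt {u v : ℂ} (hu : ‖u‖ < 1) (hv : ‖v‖ < 1) :
    ‖u - v‖ < ‖1 - (starRingEnd ℂ) v * u‖ := by
  have h := normSq_identity u v
  have h1 : (0:ℝ) < (1 - ‖u‖^2) * (1 - ‖v‖^2) := by
    apply mul_pos <;> nlinarith [norm_nonneg u, norm_nonneg v]
  nlinarith [norm_nonneg (u - v), norm_nonneg (1 - (starRingEnd ℂ) v * u)]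

lemma exp_hypDist {u v : ℂ} (hu : ‖u‖ < 1) (hv : ‖v‖ < 1) :
    Real.exp (hypDist u v) * ((1 - ‖u‖^2) * (1 - ‖v‖^2))
      = (‖1 - (starRingEnd ℂ) v * u‖ + ‖u - v‖)^2 := by
  set N := ‖1 - (starRingEnd ℂ) v * u‖ with hN
  set M := ‖u - v‖ with hM
  have hMN : M < N := MN_lt hu hv
  have hM0 : 0 ≤ M := norm_nonneg _
  have hN0 : (0:ℝ) < N := lt_of_le_of_lt hM0 hMN
  have hNne : (1 - (starRingEnd ℂ) v * u) ≠ 0 := by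
    intro h; rw [hN, h, norm_zero] at hN0; exact lt_irrefl 0 hN0
  have hrat : ‖(u - v) / (1 - (starRingEnd ℂ) v * u)‖ = M / N := by
    rw [norm_div]
  have hexp : Real.exp (hypDist u v) = (N + M) / (N - M) := by
    rw [hypDist, hrat]
    have hden1 : (0:ℝ) < 1 - M/N := by
      rw [sub_pos, div_lt_one hN0]; exact hMN
    have hden2 : (0:ℝ) < N - M := by linarith
    have heq : (1 + M / N) / (1 - M / N) = (N + M) / (N - M) := by
      rw [div_eq_div_iff hden1.ne' hden2.ne']
      field_simp
      try ring
    rw [heq, Real.exp_log (div_pos (by linarith) (by linarith))]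
  rw [hexp, ← normSq_identity u v, ← hN, ← hM]
  have hNMne : N - M ≠ 0 := by linarith
  calc (N + M)/(N - M) * (N^2 - M^2) = (N + M)^2 * ((N - M)/(N - M)) := by ring
    _ = (N + M)^2 := by rw [div_self hNMne, mul_one]

lemma hypDist_zero (v : ℂ) (hv : ‖v‖ < 1) :
    Real.exp (hypDist 0 v) = (1 + ‖v‖) / (1 - ‖v‖) := by
  have : (0 - v) / (1 - (starRingEnd ℂ) v * 0) = -v := by
    simp
  rw [hypDist, this, norm_neg, Real.exp_log]
  apply div_pos <;> nlinarith [norm_nonneg v]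

section busemann
variable {z : ℂ} {f : ℝ → ℂ}

lemma busemann (hz : ‖z‖ = 1)
    (hin : ∀ s, 0 ≤ s → ‖f s‖ < 1)
    (hiso : ∀ s t, 0 ≤ s → 0 ≤ t → hypDist (f s) (f t) = |s - t|)
    (hlim : Filter.Tendsto f Filter.atTop (nhds z))
    {s : ℝ} (hs : 0 ≤ s) :
    ‖z - f s‖^2 * (1 - ‖f 0‖^2) = Real.exp (-s) * (‖z - f 0‖^2 * (1 - ‖f s‖^2)) := by
  have h0 : ‖f 0‖ < 1 := hin 0 le_rfl
  have hs' : ‖f s‖ < 1 := hin s hs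
  set H : ℂ → ℂ → ℝ := fun u v => (‖1 - (starRingEnd ℂ) v * u‖ + ‖u - v‖)^2 with hH
  have hkey : ∀ t, s ≤ t →
      H (f s) (f t) * (1 - ‖f 0‖^2) = Real.exp (-s) * (H (f 0) (f t) * (1 - ‖f s‖^2)) := by
    intro t ht
    have ht0 : 0 ≤ t := le_trans hs ht
    have ht' : ‖f t‖ < 1 := hin t ht0
    have e1 : Real.exp (hypDist (f s) (f t)) * ((1 - ‖f s‖^2) * (1 - ‖f t‖^2)) = H (f s) (f t) :=
      exp_hypDist hs' ht'
    have e2 : Real.exp (hypDist (f 0) (f t)) * ((1 - ‖f 0‖^2) * (1 - ‖f t‖^2)) = H (f 0) (f t) :=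
      exp_hypDist h0 ht'
    rw [hiso s t hs ht0, abs_of_nonpos (by linarith), neg_sub] at e1
    rw [hiso 0 t le_rfl ht0, abs_of_nonpos (by linarith), neg_sub, sub_zero] at e2
    rw [← e1, ← e2]
    rw [show t - s = t + (-s) by ring, Real.exp_add]
    ring
  have hcont : ∀ u : ℂ, Continuous (fun v => H u v) := by
    intro u
    apply Continuous.pow
    apply Continuous.add
    · exact (continuous_const.sub (Complex.continuous_conj.mul continuous_const)).norm
    · exact (continuous_const.sub continuous_id).norm
  have hlim1 : Filter.Tendsto (fun t => H (f s) (f t) * (1 - ‖f 0‖^2)) Filter.atTop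
      (nhds (H (f s) z * (1 - ‖f 0‖^2))) :=
    (((hcont (f s)).tendsto z).comp hlim).mul_const _
  have hlim2 : Filter.Tendsto (fun t => Real.exp (-s) * (H (f 0) (f t) * (1 - ‖f s‖^2)))
      Filter.atTop (nhds (Real.exp (-s) * (H (f 0) z * (1 - ‖f s‖^2)))) :=
    ((((hcont (f 0)).tendsto z).comp hlim).mul_const _).const_mul _
  have heq : H (f s) z * (1 - ‖f 0‖^2) = Real.exp (-s) * (H (f 0) z * (1 - ‖f s‖^2)) := by
    refine tendsto_nhds_unique (hlim1.congr' ?_) hlim2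
    filter_upwards [Filter.Ici_mem_atTop s] with t ht using hkey t ht
  have hHz : ∀ u : ℂ, H u z = 4 * ‖z - u‖^2 := by
    intro u
    have h1 : 1 - (starRingEnd ℂ) z * u = (starRingEnd ℂ) z * (z - u) := by
      have hz1 : (starRingEnd ℂ) z * z = 1 := by
        rw [mul_comm]
        rw [Complex.mul_conj, Complex.normSq_eq_norm_sq, hz]
        norm_num
      rw [mul_sub, hz1]
    rw [hH]
    simp only
    rw [h1, norm_mul, RCLike.norm_conj, hz, one_mul, norm_sub_rev u z]
    ring
  rw [hHz, hHz] at heq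
  linarith
end busemann


section main
variable {z : ℂ} {f : ℝ → ℂ}

/-- unit arcs -/
lemma unitArc_shift (hin : ∀ s, 0 ≤ s → ‖f s‖ < 1)
    (hiso : ∀ s t, 0 ≤ s → 0 ≤ t → hypDist (f s) (f t) = |s - t|)
    {c : ℝ} (hc : 0 ≤ c) : IsUnitArcD (f '' Icc c (c+1)) := by
  refine ⟨fun s => f (c + s), fun s hs => hin _ (by linarith [hs.1]), fun s hs t ht => ?_, ?_⟩
  · rw [hiso _ _ (by linarith [hs.1]) (by linarith [ht.1])]
    congr 1
    ring
  · have himg : Icc c (c+1) = (fun s => c + s) '' Icc 0 1 := by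
      rw [Set.image_const_add_Icc c 0 1, add_zero]
    rw [himg, ← Set.image_comp]
    rfl

/-- pointwise bound on crossD of a piece of the ray -/
lemma crossing_bound (hz : ‖z‖ = 1)
    (hin : ∀ s, 0 ≤ s → ‖f s‖ < 1)
    (hiso : ∀ s t, 0 ≤ s → 0 ≤ t → hypDist (f s) (f t) = |s - t|)
    (hlim : Filter.Tendsto f Filter.atTop (nhds z))
    {D₀ : ℝ} (hD₀ : D₀ = hypDist 0 (f 0))
    {s : ℝ} (hs : 0 ≤ s) {g : GeodD} (hg : g ∈ crossD (f '' Icc s (s+1))) :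
    eAbs z g ≤ Real.exp D₀ * Real.exp (-s) := by
  obtain ⟨w, hwgeo, t, ht, rfl⟩ := hg
  have ht0 : 0 ≤ t := le_trans hs ht.1
  have hwlt : ‖f t‖ < 1 := hin t ht0
  have h0 : ‖f 0‖ < 1 := hin 0 le_rfl
  have hkb : eAbs z g * (1 - ‖f t‖^2) ≤ ‖z - f t‖^2 :=
    keyBound hz g.2.1 g.2.2 hwlt hwgeo.2
  have hbus := busemann hz hin hiso hlim ht0
  have hD : ‖z - f 0‖^2 ≤ Real.exp D₀ * (1 - ‖f 0‖^2) := by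
    rw [hD₀, hypDist_zero _ h0]
    have h1 : ‖z - f 0‖ ≤ 1 + ‖f 0‖ := by
      calc ‖z - f 0‖ ≤ ‖z‖ + ‖f 0‖ := norm_sub_le _ _
      _ = 1 + ‖f 0‖ := by rw [hz]
    have h2 : (0:ℝ) < 1 - ‖f 0‖ := by linarith
    rw [div_mul_eq_mul_div, le_div_iff₀ h2]
    have h3 : ‖z - f 0‖^2 ≤ (1 + ‖f 0‖)^2 := by
      nlinarith [h1, norm_nonneg (z - f 0)]
    nlinarith [h3, h2, norm_nonneg (f 0)]
  have hts : Real.exp (-t) ≤ Real.exp (-s) := Real.exp_le_exp.mpr (by linarith [ht.1])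
  have hP : (0:ℝ) < 1 - ‖f t‖^2 := by nlinarith [norm_nonneg (f t)]
  have hQ : (0:ℝ) < 1 - ‖f 0‖^2 := by nlinarith [norm_nonneg (f 0)]
  have a1 : eAbs z g * (1 - ‖f t‖^2) * (1 - ‖f 0‖^2) ≤ ‖z - f t‖^2 * (1 - ‖f 0‖^2) :=
    mul_le_mul_of_nonneg_right hkb hQ.le
  have a3 : Real.exp (-t) * (‖z - f 0‖^2 * (1 - ‖f t‖^2))
      ≤ Real.exp (-t) * ((Real.exp D₀ * (1 - ‖f 0‖^2)) * (1 - ‖f t‖^2)) :=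
    mul_le_mul_of_nonneg_left (mul_le_mul_of_nonneg_right hD hP.le) (Real.exp_pos _).le
  have a4 : Real.exp (-t) * ((Real.exp D₀ * (1 - ‖f 0‖^2)) * (1 - ‖f t‖^2))
      ≤ Real.exp (-s) * ((Real.exp D₀ * (1 - ‖f 0‖^2)) * (1 - ‖f t‖^2)) := by
    apply mul_le_mul_of_nonneg_right hts
    positivity
  have hfinal : eAbs z g * ((1 - ‖f t‖^2) * (1 - ‖f 0‖^2))
      ≤ (Real.exp D₀ * Real.exp (-s)) * ((1 - ‖f t‖^2) * (1 - ‖f 0‖^2)) := by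
    nlinarith [a1, hbus, a3, a4]
  exact le_of_mul_le_mul_right hfinal (mul_pos hP hQ)
end main

/-- Rate of decay: for a bounded measured lamination `λ`, a geodesic ray `I`
parametrized by arclength `z_d = f d` terminating at `z ∈ S¹`, and `λ_{I_d}` the
restriction of `λ` to the geodesics crossing the subray `I_d = f(Ici d)`, one has
`∫ |ẽ_z| dλ_{I_d} ≤ C₂ ‖λ‖_Th e^{-d}` for all `d ≥ 0`, with
`C₂ = 8 e^{D₀} cosh(D₀+1)/(1-e⁻¹)` depending only on the distance `D₀` from `0` to
the initial point `z₀ = f 0` of the ray. -/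
theorem eTilde_integral_decay (μ : Measure GeodD)
    (hlam : IsLamD μ) (hbdd : IsBoundedLamD μ)
    (z : ℂ) (hz : ‖z‖ = 1) (f : ℝ → ℂ)
    (hin : ∀ s, 0 ≤ s → ‖f s‖ < 1)
    (hiso : ∀ s t, 0 ≤ s → 0 ≤ t → hypDist (f s) (f t) = |s - t|)
    (hlim : Filter.Tendsto f Filter.atTop (nhds z))
    (D₀ : ℝ) (hD₀ : D₀ = hypDist 0 (f 0)) :
    ∀ d : ℝ, 0 ≤ d →
      (∫⁻ g, ENNReal.ofReal (eAbs z g) ∂(μ.restrict (crossD (f '' Ici d)))) ≤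
        ENNReal.ofReal
          ((8 * Real.exp D₀ * Real.cosh (D₀ + 1) / (1 - Real.exp (-1))) *
            thNormD μ * Real.exp (-d)) := by
  intro d hd
  have hTnn : 0 ≤ thNormD μ := by
    refine le_trans ENNReal.toReal_nonneg
      (le_csSup hbdd.2.1 ⟨_, unitArc_shift hin hiso le_rfl, rfl⟩)
  -- covering by unit arcs
  have hsub : crossD (f '' Ici d) ⊆
      ⋃ n : ℕ, crossD (f '' Icc (d + n) (d + n + 1)) := by
    rintro g ⟨w, hwgeo, t, ht, rfl⟩
    refine Set.mem_iUnion.mpr ⟨⌊t - d⌋₊, f t, hwgeo, t, ⟨?_, ?_⟩, rfl⟩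
    · have := Nat.floor_le (sub_nonneg.mpr (mem_Ici.mp ht))
      linarith
    · have := Nat.lt_floor_add_one (t - d)
      linarith
  have hpiece : ∀ n : ℕ, ∫⁻ g in crossD (f '' Icc (d + n) (d + n + 1)),
      ENNReal.ofReal (eAbs z g) ∂μ
      ≤ ENNReal.ofReal (Real.exp D₀ * Real.exp (-(d + n))) * ENNReal.ofReal (thNormD μ) := by
    intro n
    have hc : (0:ℝ) ≤ d + n := by positivity
    have harc : IsUnitArcD (f '' Icc (d + n) (d + n + 1)) := unitArc_shift hin hiso hc
    calc ∫⁻ g in crossD (f '' Icc (d + n) (d + n + 1)), ENNReal.ofReal (eAbs z g) ∂μ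
        ≤ ∫⁻ _ in crossD (f '' Icc (d + n) (d + n + 1)),
            ENNReal.ofReal (Real.exp D₀ * Real.exp (-(d + n))) ∂μ := by
          refine setLIntegral_mono measurable_const (fun g hg => ?_)
          exact ENNReal.ofReal_le_ofReal (crossing_bound hz hin hiso hlim hD₀ hc hg)
      _ = ENNReal.ofReal (Real.exp D₀ * Real.exp (-(d + n)))
            * μ (crossD (f '' Icc (d + n) (d + n + 1))) := setLIntegral_const _ _
      _ ≤ ENNReal.ofReal (Real.exp D₀ * Real.exp (-(d + n))) * ENNReal.ofReal (thNormD μ) := by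
          apply mul_le_mul_right
          have hne := hbdd.2.2 _ harc
          rw [← ENNReal.ofReal_toReal hne]
          exact ENNReal.ofReal_le_ofReal (le_csSup hbdd.2.1 ⟨_, harc, rfl⟩)
  have hterm : ∀ n : ℕ, ENNReal.ofReal (Real.exp D₀ * Real.exp (-(d + n)))
      = ENNReal.ofReal (Real.exp D₀ * Real.exp (-d)) * (ENNReal.ofReal (Real.exp (-1)))^n := by
    intro n
    rw [← ENNReal.ofReal_pow (Real.exp_pos _).le, ← ENNReal.ofReal_mul (by positivity)]
    congr 1
    have hexp : Real.exp (-(d + (n:ℝ))) = Real.exp (-d) * Real.exp (-1)^n := by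
      rw [← Real.exp_nat_mul, ← Real.exp_add]
      congr 1
      push_cast
      ring
    rw [hexp]
    ring
  have hgeom : (1:ENNReal) - ENNReal.ofReal (Real.exp (-1)) = ENNReal.ofReal (1 - Real.exp (-1)) := by
    rw [ENNReal.ofReal_sub _ (Real.exp_pos _).le, ENNReal.ofReal_one]
  have he1 : Real.exp (-1) < 1 := by
    have := Real.exp_lt_exp.mpr (show (-1:ℝ) < 0 by norm_num)
    rwa [Real.exp_zero] at this
  calc ∫⁻ g, ENNReal.ofReal (eAbs z g) ∂(μ.restrict (crossD (f '' Ici d)))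
      ≤ ∫⁻ g in ⋃ n : ℕ, crossD (f '' Icc (d + n) (d + n + 1)),
          ENNReal.ofReal (eAbs z g) ∂μ :=
        lintegral_mono' (Measure.restrict_mono hsub le_rfl) le_rfl
    _ ≤ ∑' n : ℕ, ∫⁻ g in crossD (f '' Icc (d + n) (d + n + 1)),
          ENNReal.ofReal (eAbs z g) ∂μ := lintegral_iUnion_le _ _
    _ ≤ ∑' n : ℕ, ENNReal.ofReal (Real.exp D₀ * Real.exp (-(d + n)))
          * ENNReal.ofReal (thNormD μ) := ENNReal.tsum_le_tsum hpiece
    _ = ENNReal.ofReal (Real.exp D₀ * Real.exp (-d)) * ENNReal.ofReal (thNormD μ)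
          * (1 - ENNReal.ofReal (Real.exp (-1)))⁻¹ := by
        simp_rw [hterm]
        rw [ENNReal.tsum_mul_right, ENNReal.tsum_mul_left, ENNReal.tsum_geometric]
        ring
    _ = ENNReal.ofReal (Real.exp D₀ * Real.exp (-d) * thNormD μ * (1 - Real.exp (-1))⁻¹) := by
        rw [hgeom, ← ENNReal.ofReal_inv_of_pos (by linarith)]
        rw [← ENNReal.ofReal_mul (by positivity), ← ENNReal.ofReal_mul (by positivity)]
    _ ≤ ENNReal.ofReal ((8 * Real.exp D₀ * Real.cosh (D₀ + 1) / (1 - Real.exp (-1))) *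
          thNormD μ * Real.exp (-d)) := by
        apply ENNReal.ofReal_le_ofReal
        have h8 : (1:ℝ) ≤ 8 * Real.cosh (D₀ + 1) := by
          nlinarith [Real.one_le_cosh (D₀ + 1)]
        have base : (0:ℝ) ≤ Real.exp D₀ * Real.exp (-d) * thNormD μ * (1 - Real.exp (-1))⁻¹ := by
          have hinv : (0:ℝ) < (1 - Real.exp (-1))⁻¹ := by
            apply inv_pos.mpr; linarith
          positivity
        calc Real.exp D₀ * Real.exp (-d) * thNormD μ * (1 - Real.exp (-1))⁻¹
            ≤ (8 * Real.cosh (D₀ + 1)) *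
              (Real.exp D₀ * Real.exp (-d) * thNormD μ * (1 - Real.exp (-1))⁻¹) :=
              le_mul_of_one_le_left base h8
          _ = 8 * Real.exp D₀ * Real.cosh (D₀ + 1) / (1 - Real.exp (-1)) *
              thNormD μ * Real.exp (-d) := by
              rw [div_eq_mul_inv]
              ring
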